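/- For ℓ ≥ 1, let the collar X_ℓ of length ℓ with end vertices u, v be the graph with vertex set {u, v} ∪ {a_i, b_i, c_i, d_i : 1 ≤ i ≤ ℓ}, whose edges are: all six edges among {a_i, b_i, c_i, d_i} for each i (so each quadruple induces a K₄), the edges b_i a_{i+1} for 1 ≤ i < ℓ, the edge u a_1, and the edge b_ℓ v. Then: (1) X_ℓ has exactly one perfect matching; (2) neither X_ℓ − u nor X_ℓ − v has a perfect matching; (3) X_ℓ − {u, v} has exactly 3^ℓ perfect matchings. -/

import Mathlib

open SimpleGraph

set_option linter.unnecessarySeqFocus false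

/-- `M` is (the edge set of) a perfect matching of `G`: a set of pairwise disjoint edges
of `G` covering every vertex. -/
def IsPerfectMatchingSet {V : Type*} (G : SimpleGraph V) (M : Set (Sym2 V)) : Prop :=
  M ⊆ G.edgeSet ∧ (∀ e ∈ M, ∀ f ∈ M, e ≠ f → ∀ x, x ∈ e → x ∉ f) ∧
    ∀ v : V, ∃ e ∈ M, v ∈ e

namespace PMS

variable {V : Type*} {G : SimpleGraph V} {M : Set (Sym2 V)}

lemma exu (h : IsPerfectMatchingSet G M) (x : V) : ∃! y, s(x,y) ∈ M := by
  obtain ⟨e, heM, hxe⟩ := h.2.2 x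
  induction e using Sym2.ind with
  | _ a b =>
    rcases Sym2.mem_iff.1 hxe with rfl | rfl
    · refine ⟨b, heM, fun y hy => ?_⟩
      by_contra hne
      rcases eq_or_ne s(x,y) s(x,b) with he | he
      · exact hne (Sym2.congr_right.1 he)
      · exact h.2.1 _ hy _ heM he x (Sym2.mem_mk_left x y) (Sym2.mem_mk_left x b)
    · have hax : s(x,a) ∈ M := by rwa [Sym2.eq_swap]
      refine ⟨a, hax, fun y hy => ?_⟩
      by_contra hne
      rcases eq_or_ne s(x,y) s(a,x) with he | he
      · rw [Sym2.eq_swap (a := a)] at he; exact hne (Sym2.congr_right.1 he)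
      · exact h.2.1 _ hy _ heM he x (Sym2.mem_mk_left x y) (Sym2.mem_mk_right a x)

noncomputable def partner (h : IsPerfectMatchingSet G M) (x : V) : V :=
  (exu h x).choose

lemma partner_mem (h : IsPerfectMatchingSet G M) (x : V) : s(x, partner h x) ∈ M :=
  (exu h x).choose_spec.1

lemma partner_eq (h : IsPerfectMatchingSet G M) {x y : V} (hxy : s(x,y) ∈ M) :
    partner h x = y := ((exu h x).choose_spec.2 y hxy).symm

lemma partner_adj (h : IsPerfectMatchingSet G M) (x : V) : G.Adj x (partner h x) :=
  h.1 (partner_mem h x)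

lemma partner_invol (h : IsPerfectMatchingSet G M) (x : V) :
    partner h (partner h x) = x :=
  partner_eq h (by rw [Sym2.eq_swap]; exact partner_mem h x)

lemma partner_ne (h : IsPerfectMatchingSet G M) (x : V) : partner h x ≠ x :=
  fun he => G.irrefl (he ▸ partner_adj h x)

lemma eq_range (h : IsPerfectMatchingSet G M) :
    M = Set.range (fun x => s(x, partner h x)) := by
  ext e
  constructor
  · intro he
    induction e using Sym2.ind with
    | _ a b => exact ⟨a, show s(a, partner h a) = s(a,b) by rw [partner_eq h he]⟩
  · rintro ⟨x, rfl⟩; exact partner_mem h x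

/-- a fixed-point-free involution along edges gives a perfect matching set -/
lemma range_isPMS (g : V → V) (hg : Function.Involutive g)
    (hadj : ∀ x, G.Adj x (g x)) :
    IsPerfectMatchingSet G (Set.range (fun x => s(x, g x))) := by
  have key : ∀ x z : V, z ∈ s(x, g x) → s(x, g x) = s(z, g z) := by
    intro x z hz
    rcases Sym2.mem_iff.1 hz with rfl | rfl
    · rfl
    · rw [hg x, Sym2.eq_swap]
  refine ⟨?_, ?_, ?_⟩
  · rintro e ⟨x, rfl⟩; exact (hadj x)
  · rintro e ⟨x, rfl⟩ f ⟨y, rfl⟩ hne z hz1 hz2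
    exact hne ((key x z hz1).trans (key y z hz2).symm)
  · intro x; exact ⟨s(x, g x), ⟨x, rfl⟩, Sym2.mem_mk_left _ _⟩

lemma eq_range_of_partner_eq (h : IsPerfectMatchingSet G M) (g : V → V)
    (hpg : ∀ x, partner h x = g x) : M = Set.range (fun x => s(x, g x)) := by
  have : (fun x => s(x, partner h x)) = fun x => s(x, g x) := funext fun x => by rw [hpg]
  rw [eq_range h, this]

lemma even_card (h : IsPerfectMatchingSet G M) [Fintype V] : Even (Fintype.card V) := by
  classical
  set M' : G.Subgraph :=
    { verts := Set.univ
      Adj := fun x y => s(x,y) ∈ M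
      adj_sub := fun hxy => h.1 hxy
      edge_vert := fun _ => trivial
      symm := ⟨fun x y hxy => by
        show s(y,x) ∈ M
        rwa [Sym2.eq_swap]⟩ } with hM'
  have : M'.IsPerfectMatching := by
    rw [SimpleGraph.Subgraph.isPerfectMatching_iff]
    intro x
    exact ⟨partner h x, partner_mem h x, fun y hy => (partner_eq h hy).symm⟩
  exact this.even_card

end PMS

/-- The collar `X_ℓ` of length `ℓ` with end vertices `u = Sum.inl 0` and `v = Sum.inl 1`:
`ℓ` copies of `K₄` on the quadruples `{(i,0),(i,1),(i,2),(i,3)}` (with `a_i = (i,0)` and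
`b_i = (i,1)`), the connecting edges `b_i a_{i+1}`, and the edges `u a_1` and `b_ℓ v`. -/
def collar (ℓ : ℕ) : SimpleGraph (Fin 2 ⊕ (Fin ℓ × Fin 4)) :=
  SimpleGraph.fromRel (fun x y =>
    (∃ (i : Fin ℓ) (a b : Fin 4), a ≠ b ∧ x = Sum.inr (i, a) ∧ y = Sum.inr (i, b)) ∨
    (∃ (i j : Fin ℓ), (i : ℕ) + 1 = (j : ℕ) ∧ x = Sum.inr (i, 1) ∧ y = Sum.inr (j, 0)) ∨
    (∃ j : Fin ℓ, (j : ℕ) = 0 ∧ x = Sum.inl 0 ∧ y = Sum.inr (j, 0)) ∨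
    (∃ j : Fin ℓ, (j : ℕ) = ℓ - 1 ∧ x = Sum.inr (j, 1) ∧ y = Sum.inl 1))

namespace CollarAux

variable {ℓ : ℕ}

lemma adj_u (y) : (collar ℓ).Adj (Sum.inl 0) y ↔ ∃ j : Fin ℓ, (j:ℕ) = 0 ∧ y = Sum.inr (j,0) := by
  simp only [collar, fromRel_adj]; aesop

lemma adj_v (y) : (collar ℓ).Adj (Sum.inl 1) y ↔ ∃ j : Fin ℓ, (j:ℕ) = ℓ-1 ∧ y = Sum.inr (j,1) := by
  simp only [collar, fromRel_adj]; aesop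

lemma adj_c (i : Fin ℓ) (y) : (collar ℓ).Adj (Sum.inr (i,2)) y ↔
    y = Sum.inr (i,0) ∨ y = Sum.inr (i,1) ∨ y = Sum.inr (i,3) := by
  simp only [collar, fromRel_adj]
  constructor
  · rintro ⟨hne, h | h⟩ <;>
    · rcases h with ⟨i',a,b,hab,h1,h2⟩ | ⟨i',j,hij,h1,h2⟩ | ⟨j,hj,h1,h2⟩ | ⟨j,hj,h1,h2⟩ <;>
        simp_all <;> omega
  · rintro (rfl | rfl | rfl) <;>
      exact ⟨by simp, Or.inl (Or.inl ⟨i, 2, _, by simp, rfl, rfl⟩)⟩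

lemma adj_d (i : Fin ℓ) (y) : (collar ℓ).Adj (Sum.inr (i,3)) y ↔
    y = Sum.inr (i,0) ∨ y = Sum.inr (i,1) ∨ y = Sum.inr (i,2) := by
  simp only [collar, fromRel_adj]
  constructor
  · rintro ⟨hne, h | h⟩ <;>
    · rcases h with ⟨i',a,b,hab,h1,h2⟩ | ⟨i',j,hij,h1,h2⟩ | ⟨j,hj,h1,h2⟩ | ⟨j,hj,h1,h2⟩ <;>
        simp_all <;> omega
  · rintro (rfl | rfl | rfl) <;>
      exact ⟨by simp, Or.inl (Or.inl ⟨i, 3, _, by simp, rfl, rfl⟩)⟩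

lemma adj_a (i : Fin ℓ) (y) : (collar ℓ).Adj (Sum.inr (i,0)) y ↔
    y = Sum.inr (i,1) ∨ y = Sum.inr (i,2) ∨ y = Sum.inr (i,3) ∨
    (∃ j : Fin ℓ, (j:ℕ) + 1 = (i:ℕ) ∧ y = Sum.inr (j,1)) ∨ ((i:ℕ) = 0 ∧ y = Sum.inl 0) := by
  simp only [collar, fromRel_adj]
  constructor
  · rintro ⟨hne, h | h⟩ <;>
    · rcases h with ⟨i',a,b,hab,h1,h2⟩ | ⟨i',j,hij,h1,h2⟩ | ⟨j,hj,h1,h2⟩ | ⟨j,hj,h1,h2⟩ <;>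
        simp_all <;> omega
  · rintro (rfl | rfl | rfl | ⟨j, hj, rfl⟩ | ⟨hi, rfl⟩)
    · exact ⟨by simp, Or.inl (Or.inl ⟨i, 0, 1, by simp, rfl, rfl⟩)⟩
    · exact ⟨by simp, Or.inl (Or.inl ⟨i, 0, 2, by simp, rfl, rfl⟩)⟩
    · exact ⟨by simp, Or.inl (Or.inl ⟨i, 0, 3, by simp, rfl, rfl⟩)⟩
    · exact ⟨by simp, Or.inr (Or.inr (Or.inl ⟨j, i, hj, rfl, rfl⟩))⟩
    · exact ⟨by simp, Or.inr (Or.inr (Or.inr (Or.inl ⟨i, hi, rfl, rfl⟩)))⟩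

lemma adj_b (i : Fin ℓ) (y) : (collar ℓ).Adj (Sum.inr (i,1)) y ↔
    y = Sum.inr (i,0) ∨ y = Sum.inr (i,2) ∨ y = Sum.inr (i,3) ∨
    (∃ j : Fin ℓ, (i:ℕ) + 1 = (j:ℕ) ∧ y = Sum.inr (j,0)) ∨ ((i:ℕ) = ℓ-1 ∧ y = Sum.inl 1) := by
  simp only [collar, fromRel_adj]
  constructor
  · rintro ⟨hne, h | h⟩ <;>
    · rcases h with ⟨i',a,b,hab,h1,h2⟩ | ⟨i',j,hij,h1,h2⟩ | ⟨j,hj,h1,h2⟩ | ⟨j,hj,h1,h2⟩ <;>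
        simp_all <;> omega
  · rintro (rfl | rfl | rfl | ⟨j, hj, rfl⟩ | ⟨hi, rfl⟩)
    · exact ⟨by simp, Or.inl (Or.inl ⟨i, 1, 0, by simp, rfl, rfl⟩)⟩
    · exact ⟨by simp, Or.inl (Or.inl ⟨i, 1, 2, by simp, rfl, rfl⟩)⟩
    · exact ⟨by simp, Or.inl (Or.inl ⟨i, 1, 3, by simp, rfl, rfl⟩)⟩
    · exact ⟨by simp, Or.inl (Or.inr (Or.inl ⟨i, j, hj, rfl, rfl⟩))⟩
    · exact ⟨by simp, Or.inl (Or.inr (Or.inr (Or.inr ⟨i, hi, rfl, rfl⟩)))⟩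

/-- The unique perfect matching of the collar, as a partner involution. -/
def g0 (ℓ : ℕ) (hℓ : 1 ≤ ℓ) : (Fin 2 ⊕ (Fin ℓ × Fin 4)) → (Fin 2 ⊕ (Fin ℓ × Fin 4))
  | Sum.inl t => if t = 0 then Sum.inr (⟨0, hℓ⟩, 0) else Sum.inr (⟨ℓ-1, by omega⟩, 1)
  | Sum.inr (i, t) =>
    if t = 0 then
      (if h : (i:ℕ) = 0 then Sum.inl 0 else Sum.inr (⟨(i:ℕ)-1, by have := i.2; omega⟩, 1))
    else if t = 1 then
      (if h : (i:ℕ) = ℓ-1 then Sum.inl 1 else Sum.inr (⟨(i:ℕ)+1, by have := i.2; omega⟩, 0))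
    else if t = 2 then Sum.inr (i, 3) else Sum.inr (i, 2)

lemma g0_invol (hℓ : 1 ≤ ℓ) : Function.Involutive (g0 ℓ hℓ) := by
  rintro (t | ⟨i, t⟩)
  · fin_cases t <;>
      simp only [g0] <;> split_ifs <;> (try simp_all [Fin.ext_iff]) <;> (try split_ifs) <;>
      (try simp_all [Fin.ext_iff]) <;> omega
  · have hi := i.2
    fin_cases t <;>
      simp only [g0] <;> split_ifs <;> (try simp_all [Fin.ext_iff]) <;> (try split_ifs) <;>
      (try simp_all [Fin.ext_iff]) <;> omega

lemma g0_adj (hℓ : 1 ≤ ℓ) (x) : (collar ℓ).Adj x (g0 ℓ hℓ x) := by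
  rcases x with t | ⟨i, t⟩
  · obtain rfl | rfl : t = 0 ∨ t = 1 := by revert t; decide
    · simp only [g0, if_pos rfl]
      rw [adj_u]
      exact ⟨⟨0, hℓ⟩, rfl, rfl⟩
    · simp only [g0]
      rw [if_neg (by decide), adj_v]
      exact ⟨⟨ℓ-1, by omega⟩, rfl, rfl⟩
  · have hi := i.2
    obtain rfl | rfl | rfl | rfl : t = 0 ∨ t = 1 ∨ t = 2 ∨ t = 3 := by revert t; decide
    · by_cases h : (i:ℕ) = 0
      · have hg : g0 ℓ hℓ (Sum.inr (i,0)) = Sum.inl 0 := by simp [g0, h]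
        rw [hg, adj_a]
        exact Or.inr (Or.inr (Or.inr (Or.inr ⟨h, rfl⟩)))
      · have hg : g0 ℓ hℓ (Sum.inr (i,0)) = Sum.inr (⟨(i:ℕ)-1, by omega⟩,1) := by simp [g0, h]
        rw [hg, adj_a]
        exact Or.inr (Or.inr (Or.inr (Or.inl ⟨⟨(i:ℕ)-1, by omega⟩, by simp; omega, rfl⟩)))
    · by_cases h : (i:ℕ) = ℓ-1
      · have hg : g0 ℓ hℓ (Sum.inr (i,1)) = Sum.inl 1 := by simp [g0, h]
        rw [hg, adj_b]
        exact Or.inr (Or.inr (Or.inr (Or.inr ⟨h, rfl⟩)))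
      · have hg : g0 ℓ hℓ (Sum.inr (i,1)) = Sum.inr (⟨(i:ℕ)+1, by omega⟩,0) := by simp [g0, h]
        rw [hg, adj_b]
        exact Or.inr (Or.inr (Or.inr (Or.inl ⟨⟨(i:ℕ)+1, by omega⟩, by simp, rfl⟩)))
    · have hg : g0 ℓ hℓ (Sum.inr (i,2)) = Sum.inr (i,3) := by simp [g0]
      rw [hg, adj_c]
      exact Or.inr (Or.inr rfl)
    · have hg : g0 ℓ hℓ (Sum.inr (i,3)) = Sum.inr (i,2) := by simp [g0]
      rw [hg, adj_d]
      exact Or.inr (Or.inr rfl)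

end CollarAux

namespace CollarAux

open PMS

variable {ℓ : ℕ} {M : Set (Sym2 (Fin 2 ⊕ (Fin ℓ × Fin 4)))}

lemma partner_u (hℓ : 1 ≤ ℓ) (h : IsPerfectMatchingSet (collar ℓ) M) :
    partner h (Sum.inl 0) = Sum.inr (⟨0, hℓ⟩, 0) := by
  obtain ⟨j, hj, he⟩ := (adj_u _).1 (partner_adj h (Sum.inl 0))
  rw [he]
  simp [Fin.ext_iff, hj]

lemma block (h : IsPerfectMatchingSet (collar ℓ) M) (i : Fin ℓ)
    (z) (hz : partner h (Sum.inr (i,0)) = z)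
    (hz1 : z ≠ Sum.inr (i,1)) (hz2 : z ≠ Sum.inr (i,2)) (hz3 : z ≠ Sum.inr (i,3)) :
    partner h (Sum.inr (i,2)) = Sum.inr (i,3) ∧
    ((∃ j : Fin ℓ, (i:ℕ)+1 = (j:ℕ) ∧ partner h (Sum.inr (i,1)) = Sum.inr (j,0)) ∨
     ((i:ℕ) = ℓ-1 ∧ partner h (Sum.inr (i,1)) = Sum.inl 1)) := by
  have hCD : partner h (Sum.inr (i,2)) = Sum.inr (i,3) := by
    rcases (adj_c i _).1 (partner_adj h (Sum.inr (i,2))) with hC | hC | hC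
    · exfalso
      have hinv := partner_invol h (Sum.inr (i,2))
      rw [hC, hz] at hinv
      exact hz2 hinv
    · exfalso
      -- m C = B; show D is stuck
      have hBC : partner h (Sum.inr (i,1)) = Sum.inr (i,2) := by
        have hinv := partner_invol h (Sum.inr (i,2)); rwa [hC] at hinv
      rcases (adj_d i _).1 (partner_adj h (Sum.inr (i,3))) with hD | hD | hD
      · have hinv := partner_invol h (Sum.inr (i,3))
        rw [hD, hz] at hinv
        exact hz3 hinv
      · have hinv := partner_invol h (Sum.inr (i,3))
        rw [hD, hBC] at hinv
        simp at hinv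
      · have hinv := partner_invol h (Sum.inr (i,3))
        rw [hD, hC] at hinv
        simp at hinv
    · exact hC
  refine ⟨hCD, ?_⟩
  rcases (adj_b i _).1 (partner_adj h (Sum.inr (i,1))) with hB | hB | hB | hB | hB
  · exfalso
    have hinv := partner_invol h (Sum.inr (i,1))
    rw [hB, hz] at hinv
    exact hz1 hinv
  · exfalso
    have hinv := partner_invol h (Sum.inr (i,1))
    rw [hB, hCD] at hinv
    simp at hinv
  · exfalso
    have hinv := partner_invol h (Sum.inr (i,1))
    rw [hB] at hinv
    have : partner h (Sum.inr (i,3)) = Sum.inr (i,2) := by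
      have h2 := partner_invol h (Sum.inr (i,2)); rwa [hCD] at h2
    rw [this] at hinv
    simp at hinv
  · exact Or.inl hB
  · exact Or.inr hB

lemma partner_eq_g0 (hℓ : 1 ≤ ℓ) (h : IsPerfectMatchingSet (collar ℓ) M) (x) :
    partner h x = g0 ℓ hℓ x := by
  have key : ∀ n : ℕ, ∀ hn : n < ℓ,
      partner h (Sum.inr (⟨n,hn⟩,0)) = g0 ℓ hℓ (Sum.inr (⟨n,hn⟩,0)) ∧
      partner h (Sum.inr (⟨n,hn⟩,2)) = Sum.inr (⟨n,hn⟩,3) ∧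
      partner h (Sum.inr (⟨n,hn⟩,1)) = g0 ℓ hℓ (Sum.inr (⟨n,hn⟩,1)) := by
    intro n
    induction n with
    | zero =>
      intro hn
      have hA : partner h (Sum.inr (⟨0,hn⟩,0)) = Sum.inl 0 := by
        have hinv := partner_invol h (Sum.inl 0)
        rwa [partner_u hℓ h] at hinv
      have hgA : g0 ℓ hℓ (Sum.inr ((⟨0,hn⟩ : Fin ℓ),0)) = Sum.inl 0 := by simp [g0]
      obtain ⟨hC, hB⟩ := block h ⟨0,hn⟩ _ hA (by simp) (by simp) (by simp)
      refine ⟨hgA ▸ hA, hC, ?_⟩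
      rcases hB with ⟨j, hj, he⟩ | ⟨hl, he⟩
      · simp only [Fin.val_mk] at hj
        have hne : ¬ ((0:ℕ) = ℓ-1) := by have := j.2; omega
        have hgB : g0 ℓ hℓ (Sum.inr ((⟨0,hn⟩ : Fin ℓ),1)) =
            Sum.inr (⟨0+1, by have := j.2; omega⟩,0) := by
          simp [g0, hne]
        rw [hgB, he]
        exact congrArg (fun k : Fin ℓ => Sum.inr (k, (0:Fin 4))) (by ext; simp; omega)
      · simp only [Fin.val_mk] at hl
        have hgB : g0 ℓ hℓ (Sum.inr ((⟨0,hn⟩ : Fin ℓ),1)) = Sum.inl 1 := by simp [g0, hl]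
        rw [hgB, he]
    | succ n ih =>
      intro hn
      have hn' : n < ℓ := by omega
      have hnl : ¬ ((n:ℕ) = ℓ-1) := by omega
      have hB' := (ih hn').2.2
      have hgB' : g0 ℓ hℓ (Sum.inr ((⟨n,hn'⟩ : Fin ℓ),1)) = Sum.inr (⟨n+1, hn⟩,0) := by
        simp [g0, hnl]
      rw [hgB'] at hB'
      have hA : partner h (Sum.inr (⟨n+1,hn⟩,0)) = Sum.inr (⟨n,hn'⟩,1) := by
        have hinv := partner_invol h (Sum.inr ((⟨n,hn'⟩ : Fin ℓ),1))
        rwa [hB'] at hinv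
      have hgA : g0 ℓ hℓ (Sum.inr ((⟨n+1,hn⟩ : Fin ℓ),0)) = Sum.inr (⟨n,hn'⟩,1) := by
        simp [g0, Fin.ext_iff]
      obtain ⟨hC, hB⟩ := block h ⟨n+1,hn⟩ _ hA
        (by simp [Fin.ext_iff]) (by simp [Fin.ext_iff]) (by simp [Fin.ext_iff])
      refine ⟨hgA ▸ hA, hC, ?_⟩
      rcases hB with ⟨j, hj, he⟩ | ⟨hl, he⟩
      · have hne : ¬ ((n+1:ℕ) = ℓ-1) := by have := j.2; simp at hj; omega
        have hgB : g0 ℓ hℓ (Sum.inr ((⟨n+1,hn⟩ : Fin ℓ),1)) =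
            Sum.inr (⟨n+1+1, by have := j.2; simp at hj; omega⟩,0) := by
          simp [g0, hne]
        rw [hgB, he]
        exact congrArg (fun k : Fin ℓ => Sum.inr (k, (0:Fin 4)))
          (by ext; simp only [Fin.val_mk] at hj ⊢; omega)
      · have hgB : g0 ℓ hℓ (Sum.inr ((⟨n+1,hn⟩ : Fin ℓ),1)) = Sum.inl 1 := by
          simp at hl
          simp [g0, hl]
        rw [hgB, he]
  rcases x with t | ⟨i, t⟩
  · obtain rfl | rfl : t = 0 ∨ t = 1 := by revert t; decide
    · rw [partner_u hℓ h]
      simp [g0]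
    · have hl : ℓ - 1 < ℓ := by omega
      have hB := (key (ℓ-1) hl).2.2
      have hgB : g0 ℓ hℓ (Sum.inr ((⟨ℓ-1,hl⟩ : Fin ℓ),1)) = Sum.inl 1 := by simp [g0]
      rw [hgB] at hB
      have hinv := partner_invol h (Sum.inr ((⟨ℓ-1,hl⟩ : Fin ℓ),1))
      rw [hB] at hinv
      rw [hinv]
      simp [g0]
  · have hi := i.2
    have hkey := key i.1 i.2
    have heta : (⟨i.1, i.2⟩ : Fin ℓ) = i := rfl
    rw [heta] at hkey
    obtain rfl | rfl | rfl | rfl : t = 0 ∨ t = 1 ∨ t = 2 ∨ t = 3 := by revert t; decide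
    · exact hkey.1
    · exact hkey.2.2
    · rw [hkey.2.1]
      simp [g0]
    · have hinv := partner_invol h (Sum.inr (i,2))
      rw [hkey.2.1] at hinv
      rw [hinv]
      simp [g0]

end CollarAux


namespace Collar4

open PMS

def sig : Fin 3 → Fin 4 → Fin 4 := ![![1,0,3,2], ![3,2,1,0], ![2,3,0,1]]

lemma sig_invol : ∀ k t, sig k (sig k t) = t := by decide
lemma sig_ne : ∀ k t, sig k t ≠ t := by decide
lemma sig_one_inj : ∀ k k', sig k 1 = sig k' 1 → k = k' := by decide

variable {ℓ : ℕ}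

abbrev V' (ℓ : ℕ) := {x : Fin 2 ⊕ (Fin ℓ × Fin 4) // x ≠ Sum.inl 0 ∧ x ≠ Sum.inl 1}

def vt (i : Fin ℓ) (t : Fin 4) : V' ℓ := ⟨Sum.inr (i,t), by simp⟩

lemma vt_inj {i j : Fin ℓ} {t t' : Fin 4} (h : vt i t = vt j t') : i = j ∧ t = t' := by
  have := congrArg Subtype.val h
  simpa [vt] using this

lemma vt_ne {i j : Fin ℓ} {t t' : Fin 4} (h : t ≠ t') : vt i t ≠ vt j t' :=
  fun he => h (vt_inj he).2

lemma vt_ne' {i j : Fin ℓ} {t t' : Fin 4} (h : i ≠ j) : vt i t ≠ vt j t' :=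
  fun he => h (vt_inj he).1

abbrev G' (ℓ : ℕ) : SimpleGraph (V' ℓ) :=
  (collar ℓ).induce {x | x ≠ Sum.inl 0 ∧ x ≠ Sum.inl 1}

def g1 (f : Fin ℓ → Fin 3) : V' ℓ → V' ℓ
  | ⟨Sum.inr (i, t), _⟩ => ⟨Sum.inr (i, sig (f i) t), by simp⟩
  | ⟨Sum.inl t, hx⟩ => False.elim (by
      obtain rfl | rfl : t = 0 ∨ t = 1 := by fin_cases t <;> simp
      exacts [hx.1 rfl, hx.2 rfl])

lemma g1_vt (f : Fin ℓ → Fin 3) (i t) : g1 f (vt i t) = vt i (sig (f i) t) := rfl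

lemma g1_invol (f : Fin ℓ → Fin 3) : Function.Involutive (g1 f) := by
  rintro ⟨x, hx⟩
  rcases x with t | ⟨i, t⟩
  · exfalso
    obtain rfl | rfl : t = 0 ∨ t = 1 := by fin_cases t <;> simp
    exacts [hx.1 rfl, hx.2 rfl]
  · show g1 f (g1 f (vt i t)) = vt i t
    rw [g1_vt, g1_vt, sig_invol]

lemma g1_adj (f : Fin ℓ → Fin 3) (x : V' ℓ) : (G' ℓ).Adj x (g1 f x) := by
  obtain ⟨x, hx⟩ := x
  rcases x with t | ⟨i, t⟩
  · exfalso
    obtain rfl | rfl : t = 0 ∨ t = 1 := by fin_cases t <;> simp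
    exacts [hx.1 rfl, hx.2 rfl]
  · show (G' ℓ).Adj (vt i t) (vt i (sig (f i) t))
    rw [comap_adj]
    show (collar ℓ).Adj (Sum.inr (i,t)) (Sum.inr (i, sig (f i) t))
    rw [collar, fromRel_adj]
    exact ⟨by simp [Ne.symm (sig_ne (f i) t)],
      Or.inl (Or.inl ⟨i, t, sig (f i) t, Ne.symm (sig_ne (f i) t), rfl, rfl⟩)⟩

variable {M : Set (Sym2 (V' ℓ))}

lemma adj_val (h : IsPerfectMatchingSet (G' ℓ) M) (x : V' ℓ) :
    (collar ℓ).Adj x.val (partner h x).val := by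
  have := partner_adj h x
  rwa [comap_adj] at this

lemma not_inl (x : V' ℓ) (t : Fin 2) : x.val ≠ Sum.inl t := by
  obtain ⟨x, hx⟩ := x
  obtain rfl | rfl : t = 0 ∨ t = 1 := by fin_cases t <;> simp
  exacts [hx.1, hx.2]

lemma opt_c (h : IsPerfectMatchingSet (G' ℓ) M) (i : Fin ℓ) :
    partner h (vt i 2) = vt i 0 ∨ partner h (vt i 2) = vt i 1 ∨ partner h (vt i 2) = vt i 3 := by
  rcases (CollarAux.adj_c i _).1 (adj_val h (vt i 2)) with he | he | he
  · exact Or.inl (Subtype.ext he)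
  · exact Or.inr (Or.inl (Subtype.ext he))
  · exact Or.inr (Or.inr (Subtype.ext he))

lemma opt_d (h : IsPerfectMatchingSet (G' ℓ) M) (i : Fin ℓ) :
    partner h (vt i 3) = vt i 0 ∨ partner h (vt i 3) = vt i 1 ∨ partner h (vt i 3) = vt i 2 := by
  rcases (CollarAux.adj_d i _).1 (adj_val h (vt i 3)) with he | he | he
  · exact Or.inl (Subtype.ext he)
  · exact Or.inr (Or.inl (Subtype.ext he))
  · exact Or.inr (Or.inr (Subtype.ext he))

lemma opt_a (h : IsPerfectMatchingSet (G' ℓ) M) (i : Fin ℓ) :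
    partner h (vt i 0) = vt i 1 ∨ partner h (vt i 0) = vt i 2 ∨ partner h (vt i 0) = vt i 3 ∨
    ∃ j : Fin ℓ, (j:ℕ) + 1 = (i:ℕ) ∧ partner h (vt i 0) = vt j 1 := by
  rcases (CollarAux.adj_a i _).1 (adj_val h (vt i 0)) with he | he | he | ⟨j, hj, he⟩ | ⟨hi, he⟩
  · exact Or.inl (Subtype.ext he)
  · exact Or.inr (Or.inl (Subtype.ext he))
  · exact Or.inr (Or.inr (Or.inl (Subtype.ext he)))
  · exact Or.inr (Or.inr (Or.inr ⟨j, hj, Subtype.ext he⟩))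
  · exact absurd he (not_inl _ 0)

lemma opt_b (h : IsPerfectMatchingSet (G' ℓ) M) (i : Fin ℓ) :
    partner h (vt i 1) = vt i 0 ∨ partner h (vt i 1) = vt i 2 ∨ partner h (vt i 1) = vt i 3 ∨
    ∃ j : Fin ℓ, (i:ℕ) + 1 = (j:ℕ) ∧ partner h (vt i 1) = vt j 0 := by
  rcases (CollarAux.adj_b i _).1 (adj_val h (vt i 1)) with he | he | he | ⟨j, hj, he⟩ | ⟨hi, he⟩
  · exact Or.inl (Subtype.ext he)
  · exact Or.inr (Or.inl (Subtype.ext he))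
  · exact Or.inr (Or.inr (Or.inl (Subtype.ext he)))
  · exact Or.inr (Or.inr (Or.inr ⟨j, hj, Subtype.ext he⟩))
  · exact absurd he (not_inl _ 1)

lemma stuck (h : IsPerfectMatchingSet (G' ℓ) M) (i : Fin ℓ)
    (hA : partner h (vt i 0) = vt i 2 ∨ partner h (vt i 0) = vt i 3)
    (hB2 : partner h (vt i 1) ≠ vt i 2) (hB3 : partner h (vt i 1) ≠ vt i 3) : False := by
  rcases hA with hA | hA
  · have hC : partner h (vt i 2) = vt i 0 := by
      have := partner_invol h (vt i 0); rwa [hA] at this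
    rcases opt_d h i with hD | hD | hD
    · have := partner_invol h (vt i 3)
      rw [hD, hA] at this
      exact vt_ne (by decide) this
    · have := partner_invol h (vt i 3)
      rw [hD] at this
      exact hB3 this
    · have := partner_invol h (vt i 3)
      rw [hD, hC] at this
      exact vt_ne (by decide) this
  · have hD : partner h (vt i 3) = vt i 0 := by
      have := partner_invol h (vt i 0); rwa [hA] at this
    rcases opt_c h i with hC | hC | hC
    · have := partner_invol h (vt i 2)
      rw [hC, hA] at this
      exact vt_ne (by decide) this
    · have := partner_invol h (vt i 2)
      rw [hC] at this
      exact hB2 this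
    · have := partner_invol h (vt i 2)
      rw [hC, hD] at this
      exact vt_ne (by decide) this

lemma noconn (h : IsPerfectMatchingSet (G' ℓ) M) :
    ∀ n : ℕ, ∀ (hn : n < ℓ) (hn1 : n+1 < ℓ),
      partner h (vt ⟨n,hn⟩ 1) ≠ vt ⟨n+1,hn1⟩ 0 := by
  intro n
  induction n with
  | zero =>
    intro hn hn1 he
    have hB2 : partner h (vt (⟨0,hn⟩ : Fin ℓ) 1) ≠ vt ⟨0,hn⟩ 2 := by
      rw [he]; exact vt_ne' (by simp [Fin.ext_iff])
    have hB3 : partner h (vt (⟨0,hn⟩ : Fin ℓ) 1) ≠ vt ⟨0,hn⟩ 3 := by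
      rw [he]; exact vt_ne' (by simp [Fin.ext_iff])
    refine stuck h ⟨0,hn⟩ ?_ hB2 hB3
    rcases opt_a h ⟨0,hn⟩ with hA | hA | hA | ⟨j, hj, hA⟩
    · exfalso
      have := partner_invol h (vt (⟨0,hn⟩ : Fin ℓ) 0)
      rw [hA, he] at this
      exact vt_ne' (by simp [Fin.ext_iff]) this
    · exact Or.inl hA
    · exact Or.inr hA
    · exfalso
      simp only [Fin.val_mk] at hj
      omega
  | succ n ih =>
    intro hn hn1 he
    have hB2 : partner h (vt (⟨n+1,hn⟩ : Fin ℓ) 1) ≠ vt ⟨n+1,hn⟩ 2 := by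
      rw [he]; exact vt_ne' (by simp [Fin.ext_iff])
    have hB3 : partner h (vt (⟨n+1,hn⟩ : Fin ℓ) 1) ≠ vt ⟨n+1,hn⟩ 3 := by
      rw [he]; exact vt_ne' (by simp [Fin.ext_iff])
    refine stuck h ⟨n+1,hn⟩ ?_ hB2 hB3
    rcases opt_a h ⟨n+1,hn⟩ with hA | hA | hA | ⟨j, hj, hA⟩
    · exfalso
      have := partner_invol h (vt (⟨n+1,hn⟩ : Fin ℓ) 0)
      rw [hA, he] at this
      exact vt_ne' (by simp [Fin.ext_iff]) this
    · exact Or.inl hA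
    · exact Or.inr hA
    · exfalso
      simp only [Fin.val_mk] at hj
      have hjn : j = (⟨n, by omega⟩ : Fin ℓ) := by ext; simp; omega
      rw [hjn] at hA
      have := partner_invol h (vt (⟨n+1,hn⟩ : Fin ℓ) 0)
      rw [hA] at this
      exact ih (by omega) hn this

lemma noconn' (h : IsPerfectMatchingSet (G' ℓ) M) (i j : Fin ℓ) (hij : (i:ℕ) + 1 = (j:ℕ)) :
    partner h (vt i 1) ≠ vt j 0 := by
  have h1 : ((i:ℕ)) < ℓ := i.2
  have h2 : (i:ℕ)+1 < ℓ := by rw [hij]; exact j.2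
  have := noconn h i.1 h1 h2
  have hi : (⟨(i:ℕ), h1⟩ : Fin ℓ) = i := rfl
  have hj : (⟨(i:ℕ)+1, h2⟩ : Fin ℓ) = j := by ext; simp [hij]
  rwa [hi, hj] at this

lemma inv' (h : IsPerfectMatchingSet (G' ℓ) M) {x y : V' ℓ}
    (he : partner h x = y) : partner h y = x := by
  have := partner_invol h x
  rwa [he] at this

/-- the three patterns of a block -/
lemma block4 (h : IsPerfectMatchingSet (G' ℓ) M) (i : Fin ℓ) :
    ∃ k : Fin 3, ∀ t : Fin 4, partner h (vt i t) = vt i (sig k t) := by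
  have inv : ∀ t t' : Fin 4, partner h (vt i t) = vt i t' → partner h (vt i t') = vt i t := by
    intro t t' he
    have := partner_invol h (vt i t)
    rwa [he] at this
  rcases opt_b h i with hB | hB | hB | ⟨j, hj, hB⟩
  · -- pattern 0 : B–A, C–D
    have hA := inv _ _ hB
    have hC : partner h (vt i 2) = vt i 3 := by
      rcases opt_c h i with hC | hC | hC
      · exact absurd (hA.symm.trans (inv _ _ hC)) (vt_ne (by decide))
      · exact absurd (hB.symm.trans (inv _ _ hC)) (vt_ne (by decide))
      · exact hC
    have hD := inv _ _ hC
    refine ⟨0, fun t => ?_⟩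
    fin_cases t
    · exact hA
    · exact hB
    · exact hC
    · exact hD
  · -- pattern 1 : B–C, A–D
    have hC := inv _ _ hB
    have hA : partner h (vt i 0) = vt i 3 := by
      rcases opt_a h i with hA | hA | hA | ⟨j, hj, hA⟩
      · exact absurd (hB.symm.trans (inv _ _ hA)) (vt_ne (by decide))
      · exact absurd (hC.symm.trans (inv _ _ hA)) (vt_ne (by decide))
      · exact hA
      · exact absurd (inv' h hA) (noconn' h j i hj)
    have hD := inv _ _ hA
    refine ⟨1, fun t => ?_⟩
    fin_cases t
    · exact hA
    · exact hB
    · exact hC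
    · exact hD
  · -- pattern 2 : B–D, A–C
    have hD := inv _ _ hB
    have hA : partner h (vt i 0) = vt i 2 := by
      rcases opt_a h i with hA | hA | hA | ⟨j, hj, hA⟩
      · exact absurd (hB.symm.trans (inv _ _ hA)) (vt_ne (by decide))
      · exact hA
      · exact absurd (hD.symm.trans (inv _ _ hA)) (vt_ne (by decide))
      · exact absurd (inv' h hA) (noconn' h j i hj)
    have hC := inv _ _ hA
    refine ⟨2, fun t => ?_⟩
    fin_cases t
    · exact hA
    · exact hB
    · exact hC
    · exact hD
  · exact absurd hB (noconn' h i j hj)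

noncomputable def encode (h : IsPerfectMatchingSet (G' ℓ) M) : Fin ℓ → Fin 3 :=
  fun i => (block4 h i).choose

lemma encode_spec (h : IsPerfectMatchingSet (G' ℓ) M) (i : Fin ℓ) (t : Fin 4) :
    partner h (vt i t) = vt i (sig (encode h i) t) := (block4 h i).choose_spec t

lemma partner_eq_g1 (h : IsPerfectMatchingSet (G' ℓ) M) (x : V' ℓ) :
    partner h x = g1 (encode h) x := by
  obtain ⟨xv, hx⟩ := x
  rcases xv with t | ⟨i, t⟩
  · exfalso
    obtain rfl | rfl : t = 0 ∨ t = 1 := by fin_cases t <;> simp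
    exacts [hx.1 rfl, hx.2 rfl]
  · show partner h (vt i t) = g1 (encode h) (vt i t)
    rw [g1_vt]
    exact encode_spec h i t

end Collar4

/-- For `ℓ ≥ 1` the collar `X_ℓ` has exactly one perfect matching; deleting one of its end
vertices leaves no perfect matching; deleting both end vertices leaves exactly `3^ℓ`
perfect matchings. -/
theorem collar_perfect_matchings (ℓ : ℕ) (hℓ : 1 ≤ ℓ) :
    Nat.card {M : Set (Sym2 (Fin 2 ⊕ (Fin ℓ × Fin 4))) //
        IsPerfectMatchingSet (collar ℓ) M} = 1 ∧
    (¬ ∃ M, IsPerfectMatchingSet ((collar ℓ).induce {x | x ≠ Sum.inl 0}) M) ∧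
    (¬ ∃ M, IsPerfectMatchingSet ((collar ℓ).induce {x | x ≠ Sum.inl 1}) M) ∧
    Nat.card {M : Set (Sym2 ({x : Fin 2 ⊕ (Fin ℓ × Fin 4) // x ≠ Sum.inl 0 ∧ x ≠ Sum.inl 1})) //
        IsPerfectMatchingSet ((collar ℓ).induce {x | x ≠ Sum.inl 0 ∧ x ≠ Sum.inl 1}) M} =
      3 ^ ℓ := by
  classical
  refine ⟨?_, ?_, ?_, ?_⟩
  · rw [Nat.card_eq_one_iff_unique]
    refine ⟨⟨fun A B => ?_⟩,
      ⟨_, PMS.range_isPMS _ (CollarAux.g0_invol hℓ) (CollarAux.g0_adj hℓ)⟩⟩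
    obtain ⟨M, h⟩ := A
    obtain ⟨M', h'⟩ := B
    apply Subtype.ext
    show M = M'
    rw [PMS.eq_range_of_partner_eq h _ (CollarAux.partner_eq_g0 hℓ h),
        PMS.eq_range_of_partner_eq h' _ (CollarAux.partner_eq_g0 hℓ h')]
  · rintro ⟨M, h⟩
    have hev := PMS.even_card h
    have hcard : Fintype.card {x : Fin 2 ⊕ (Fin ℓ × Fin 4) // x ≠ Sum.inl 0} = 4*ℓ+1 := by
      rw [Fintype.card_subtype_compl, Fintype.card_subtype_eq]
      simp [Fintype.card_sum]
      omega
    rw [show (Fintype.card ↥{x : Fin 2 ⊕ (Fin ℓ × Fin 4) | x ≠ Sum.inl 0}) = 4*ℓ+1 from hcard]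
      at hev
    rw [Nat.even_iff] at hev
    omega
  · rintro ⟨M, h⟩
    have hev := PMS.even_card h
    have hcard : Fintype.card {x : Fin 2 ⊕ (Fin ℓ × Fin 4) // x ≠ Sum.inl 1} = 4*ℓ+1 := by
      rw [Fintype.card_subtype_compl, Fintype.card_subtype_eq]
      simp [Fintype.card_sum]
      omega
    rw [show (Fintype.card ↥{x : Fin 2 ⊕ (Fin ℓ × Fin 4) | x ≠ Sum.inl 1}) = 4*ℓ+1 from hcard]
      at hev
    rw [Nat.even_iff] at hev
    omega
  · set φ : (Fin ℓ → Fin 3) → {M // IsPerfectMatchingSet (Collar4.G' ℓ) M} := fun f =>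
      ⟨Set.range (fun x => s(x, Collar4.g1 f x)),
        PMS.range_isPMS _ (Collar4.g1_invol f) (Collar4.g1_adj f)⟩ with hφ
    have hinj : Function.Injective φ := by
      intro f f' he
      have hMe : (Set.range (fun x => s(x, Collar4.g1 f x))) =
          (Set.range (fun x => s(x, Collar4.g1 f' x))) := congrArg Subtype.val he
      have h' := (φ f').2
      have hgg : ∀ x, Collar4.g1 f x = Collar4.g1 f' x := by
        intro x
        have hx : s(x, Collar4.g1 f x) ∈ (φ f').val := by
          show s(x, Collar4.g1 f x) ∈ Set.range (fun x => s(x, Collar4.g1 f' x))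
          rw [← hMe]
          exact ⟨x, rfl⟩
        have h1 := PMS.partner_eq h' hx
        have h2 := PMS.partner_eq h' (⟨x, rfl⟩ : s(x, Collar4.g1 f' x) ∈ (φ f').val)
        exact h1.symm.trans h2
      funext i
      apply Collar4.sig_one_inj
      have hvt := hgg (Collar4.vt i 1)
      rw [Collar4.g1_vt, Collar4.g1_vt] at hvt
      exact (Collar4.vt_inj hvt).2
    have hsurj : Function.Surjective φ := by
      rintro ⟨M, h⟩
      exact ⟨Collar4.encode h,
        Subtype.ext (PMS.eq_range_of_partner_eq h _ (Collar4.partner_eq_g1 h)).symm⟩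
    rw [← Nat.card_eq_of_bijective φ ⟨hinj, hsurj⟩, Nat.card_eq_fintype_card,
      Fintype.card_fun, Fintype.card_fin, Fintype.card_fin]
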